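/- Let A be a unital C*-algebra and a₁,…,aₙ,b₁,…,bₘ ∈ A self-adjoint. Then the topological free entropy is subadditive: χ_top(a₁,…,aₙ,b₁,…,bₘ) ≤ χ_top(a₁,…,aₙ : b₁,…,bₘ) + χ_top(b₁,…,bₘ : a₁,…,aₙ) ≤ χ_top(a₁,…,aₙ) + χ_top(b₁,…,bₘ). -/

import Mathlib

open scoped ComplexOrder
open Matrix MeasureTheory Filter
open scoped ENNReal NNReal
noncomputable section

/-! ### Self-adjoint matrices as a real Hilbert space with ⟪A,B⟫ = Re Tr(AB) -/

/-- The space of `k × k` complex matrices. -/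
abbrev Mat (k : ℕ) : Type := Matrix (Fin k) (Fin k) ℂ

/-- The operator norm of a `k × k` complex matrix (the norm of the induced operator on `ℓ²`). -/
def opNorm {k : ℕ} (M : Mat k) : ℝ := ‖Matrix.toEuclideanCLM (𝕜 := ℂ) M‖

/-- Self-adjoint `k × k` complex matrices, as a standalone type. -/
@[ext] structure SA (k : ℕ) : Type where
  val : Mat k
  isSA : star val = val

namespace SA
variable {k : ℕ}

lemma val_injective : Function.Injective (SA.val (k := k)) := by
  rintro ⟨a, _⟩ ⟨b, _⟩ h
  cases h; rfl

instance : Zero (SA k) := ⟨⟨0, star_zero _⟩⟩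
instance : Add (SA k) := ⟨fun A B => ⟨A.val + B.val, by rw [star_add, A.isSA, B.isSA]⟩⟩
instance : Neg (SA k) := ⟨fun A => ⟨-A.val, by rw [star_neg, A.isSA]⟩⟩
instance : Sub (SA k) := ⟨fun A B => ⟨A.val - B.val, by rw [star_sub, A.isSA, B.isSA]⟩⟩
instance : SMul ℕ (SA k) := ⟨fun n A => ⟨n • A.val, by rw [star_nsmul, A.isSA]⟩⟩
instance : SMul ℤ (SA k) := ⟨fun n A => ⟨n • A.val, by rw [star_zsmul, A.isSA]⟩⟩
instance : SMul ℝ (SA k) :=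
  ⟨fun r A => ⟨r • A.val, by rw [star_smul, star_trivial, A.isSA]⟩⟩

instance : AddCommGroup (SA k) :=
  val_injective.addCommGroup SA.val rfl (fun _ _ => rfl) (fun _ => rfl) (fun _ _ => rfl)
    (fun _ _ => rfl) (fun _ _ => rfl)

instance : Module ℝ (SA k) :=
  val_injective.module ℝ
    { toFun := SA.val, map_zero' := rfl, map_add' := fun _ _ => rfl } (fun _ _ => rfl)

lemma trace_sq (A : SA k) :
    Matrix.trace (A.val * A.val) = ((∑ i, ∑ j, Complex.normSq (A.val j i) : ℝ) : ℂ) := by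
  have hA : A.valᴴ = A.val := A.isSA
  rw [show A.val * A.val = A.valᴴ * A.val by rw [hA]]
  push_cast
  simp [Matrix.trace, Matrix.diag, Matrix.mul_apply, Matrix.conjTranspose_apply,
    Complex.star_def, ← Complex.normSq_eq_conj_mul_self]

/-- The real inner product ⟪A,B⟫ = Re Tr(AB) on self-adjoint matrices. -/
def core (k : ℕ) : InnerProductSpace.Core ℝ (SA k) where
  inner A B := (Matrix.trace (A.val * B.val)).re
  conj_inner_symm A B := by simp [Matrix.trace_mul_comm A.val B.val]
  re_inner_nonneg A := by
    show (0:ℝ) ≤ (Matrix.trace (A.val * A.val)).re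
    rw [trace_sq]
    simp only [Complex.ofReal_re]
    exact Finset.sum_nonneg fun i _ => Finset.sum_nonneg fun j _ => Complex.normSq_nonneg _
  definite A := by
    intro h
    have h2 : (Matrix.trace (A.val * A.val)).re = 0 := h
    rw [trace_sq] at h2
    simp only [Complex.ofReal_re] at h2
    have hz := (Finset.sum_eq_zero_iff_of_nonneg (fun i _ => Finset.sum_nonneg
      (fun j _ => Complex.normSq_nonneg (A.val j i)))).mp h2
    have : A.val = 0 := by
      ext i j
      have := (Finset.sum_eq_zero_iff_of_nonneg
        (fun l _ => Complex.normSq_nonneg (A.val l j))).mp (hz j (Finset.mem_univ j)) i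
        (Finset.mem_univ i)
      simpa [Complex.normSq_eq_zero] using this
    exact val_injective this
  add_left A B C := by
    show (Matrix.trace ((A.val + B.val) * C.val)).re = _
    simp [add_mul, Matrix.trace_add]
  smul_left A B r := by
    show (Matrix.trace ((r • A.val) * B.val)).re = _
    simp [smul_mul_assoc, Matrix.trace_smul]

instance : NormedAddCommGroup (SA k) := (core k).toNormedAddCommGroup
instance : InnerProductSpace ℝ (SA k) := InnerProductSpace.ofCore (core k).toCore
instance : MeasurableSpace (SA k) := borel _
instance : BorelSpace (SA k) := ⟨rfl⟩
instance : FiniteDimensional ℝ (SA k) :=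
  FiniteDimensional.of_injective
    ({ toFun := SA.val, map_add' := fun _ _ => rfl,
       map_smul' := fun _ _ => rfl } : SA k →ₗ[ℝ] Mat k)
    val_injective





end SA
/-! ### Noncommutative polynomials -/

/-- Noncommutative polynomials with complex coefficients in `N` indeterminates. -/
abbrev NCPoly (N : ℕ) : Type := FreeAlgebra ℂ (Fin N)

/-- Evaluation of a noncommutative polynomial at an `N`-tuple of elements of a
unital complex algebra. -/
def NCPoly.eval {N : ℕ} {B : Type*} [Ring B] [Algebra ℂ B] (P : NCPoly N) (x : Fin N → B) : B :=
  FreeAlgebra.lift ℂ x P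

/-- The ordered product `x (w 0) * x (w 1) * ⋯ * x (w (p-1))` of the word `w`. -/
def wordProd {B : Type*} [Monoid B] {N : ℕ} (x : Fin N → B) {p : ℕ} (w : Fin p → Fin N) : B :=
  (List.ofFn fun i => x (w i)).prod

/-! ### Tracial states -/

section TracialState
variable {A : Type*} [Ring A] [Module ℂ A] [StarRing A]

/-- A tracial state on a unital complex ⋆-algebra: a linear functional `τ` with `τ 1 = 1`,
`τ (x⋆ x) ≥ 0` and `τ (x y) = τ (y x)`. -/
structure IsTracialState (τ : A →ₗ[ℂ] ℂ) : Prop where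
  map_one : τ 1 = 1
  nonneg : ∀ x : A, 0 ≤ τ (star x * x)
  mul_comm : ∀ x y : A, τ (x * y) = τ (y * x)

end TracialState

/-! ### Voiculescu's microstates free entropy and free capacity -/

section FreeEntropy
variable {A : Type*} [Ring A] [Module ℂ A] [StarRing A] {n m : ℕ}

/-- The matricial microstates `Γ_R(a₁,…,aₙ,b₁,…,bₘ; k, l, ε; τ)`: tuples of self-adjoint
`k × k` matrices of operator norm at most `R` such that the normalized trace of every word of
length between `1` and `l` differs by at most `ε` from the corresponding `τ`-moment. -/
def GammaR (R : ℝ) (a : Fin n → A) (b : Fin m → A) (τ : A →ₗ[ℂ] ℂ) (k l : ℕ) (ε : ℝ) :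
    Set ((Fin n → SA k) × (Fin m → SA k)) :=
  {CD | (∀ i, opNorm (CD.1 i).val ≤ R) ∧ (∀ j, opNorm (CD.2 j).val ≤ R) ∧
    ∀ (p : ℕ), 1 ≤ p → p ≤ l → ∀ w : Fin p → Fin (n + m),
      ‖(k : ℂ)⁻¹ *
          Matrix.trace (wordProd (Fin.append (fun i => (CD.1 i).val) fun j => (CD.2 j).val) w)
        - τ (wordProd (Fin.append a b) w)‖ ≤ ε}

/-- The microstates for `a₁,…,aₙ` in the presence of `b₁,…,bₘ`: the projection of
`Γ_R(a₁,…,aₙ,b₁,…,bₘ; k, l, ε; τ)` on the first `n` coordinates. -/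
def GammaRPres (R : ℝ) (a : Fin n → A) (b : Fin m → A) (τ : A →ₗ[ℂ] ℂ) (k l : ℕ) (ε : ℝ) :
    Set (Fin n → SA k) :=
  Prod.fst '' GammaR R a b τ k l ε

/-- Voiculescu's microstates free entropy `χ(a₁,…,aₙ : b₁,…,bₘ; τ)` of `a₁,…,aₙ` in the
presence of `b₁,…,bₘ`, with respect to the tracial state `τ`. -/
def chiPres (a : Fin n → A) (b : Fin m → A) (τ : A →ₗ[ℂ] ℂ) : EReal :=
  ⨆ (R : ℝ) (_ : 0 < R), ⨅ (l : ℕ) (ε : ℝ) (_ : 0 < ε),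
    Filter.atTop.limsup fun k : ℕ =>
      (↑(((k : ℝ) ^ 2)⁻¹) : EReal) * ENNReal.log (volume (GammaRPres R a b τ k l ε))
        + (↑((n : ℝ) / 2 * Real.log k) : EReal)

/-- Voiculescu's microstates free entropy `χ(a₁,…,aₙ; τ)`. -/
def chi (a : Fin n → A) (τ : A →ₗ[ℂ] ℂ) : EReal :=
  chiPres a (fun i : Fin 0 => i.elim0) τ

/-- The free capacity `κ(a₁,…,aₙ : b₁,…,bₘ)` of `a₁,…,aₙ` in the presence of `b₁,…,bₘ`:
the supremum of `χ(a₁,…,aₙ : b₁,…,bₘ; τ)` over all tracial states `τ` of the ambient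
algebra. -/
def kappaPres (a : Fin n → A) (b : Fin m → A) : EReal :=
  ⨆ (τ : A →ₗ[ℂ] ℂ) (_ : IsTracialState τ), chiPres a b τ

/-- The free capacity `κ(a₁,…,aₙ)`. -/
def kappa (a : Fin n → A) : EReal :=
  ⨆ (τ : A →ₗ[ℂ] ℂ) (_ : IsTracialState τ), chi a τ

end FreeEntropy

/-! ### Topological free entropy -/

section TopEntropy
variable {A : Type*} [NormedRing A] [NormedAlgebra ℂ A] [StarRing A] {n m : ℕ}

/-- The norm-microstates `Γ_top(a₁,…,aₙ,b₁,…,bₘ; k, ε, P₁,…,P_r)`: tuples of self-adjoint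
`k × k` matrices on which each of the noncommutative polynomials `P j` has operator norm
`ε`-close to its norm at `(a, b)`. -/
def GammaTop (a : Fin n → A) (b : Fin m → A) (k : ℕ) (ε : ℝ) {r : ℕ}
    (P : Fin r → NCPoly (n + m)) : Set ((Fin n → SA k) × (Fin m → SA k)) :=
  {CD | ∀ j : Fin r,
    |opNorm ((P j).eval (Fin.append (fun i => (CD.1 i).val) fun i => (CD.2 i).val))
      - ‖(P j).eval (Fin.append a b)‖| ≤ ε}

/-- Norm-microstates of `a₁,…,aₙ` in the presence of `b₁,…,bₘ`: the projection of
`Γ_top(a₁,…,aₙ,b₁,…,bₘ; k, ε, P₁,…,P_r)` on the first `n` coordinates. -/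
def GammaTopPres (a : Fin n → A) (b : Fin m → A) (k : ℕ) (ε : ℝ) {r : ℕ}
    (P : Fin r → NCPoly (n + m)) : Set (Fin n → SA k) :=
  Prod.fst '' GammaTop a b k ε P

/-- The topological free entropy `χ_top(a₁,…,aₙ : b₁,…,bₘ)` of `a₁,…,aₙ` in the presence
of `b₁,…,bₘ`. -/
def chiTopPres (a : Fin n → A) (b : Fin m → A) : EReal :=
  ⨅ (ε : ℝ) (_ : 0 < ε) (r : ℕ) (P : Fin r → NCPoly (n + m)),
    Filter.atTop.limsup fun k : ℕ =>
      (↑(((k : ℝ) ^ 2)⁻¹) : EReal) * ENNReal.log (volume (GammaTopPres a b k ε P))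
        + (↑((n : ℝ) / 2 * Real.log k) : EReal)

/-- The topological free entropy `χ_top(a₁,…,aₙ)`. -/
def chiTop (a : Fin n → A) : EReal :=
  chiTopPres a (fun i : Fin 0 => i.elim0)

end TopEntropy
/-! ### Topological free entropy dimension -/

/-- The minimal number of elements of an `ε`-net of `X` for the distance function `d`
(`⊤` if there is no finite `ε`-net). -/
def coveringNumber {α : Type*} (d : α → α → ℝ) (ε : ℝ) (X : Set α) : ℕ∞ :=
  ⨅ (S : Finset α) (_ : ∀ x ∈ X, ∃ s ∈ S, d x s ≤ ε), (S.card : ℕ∞)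

/-- The metric on `n`-tuples of `k × k` matrices given by the maximum of the operator norms
of the differences of the coordinates. -/
def opDist {n k : ℕ} (x y : Fin n → Mat k) : ℝ := ⨆ i, opNorm (x i - y i)

/-- The normalized Hilbert–Schmidt metric
`|(A₁,…,Aₙ)|₂ = k^{-1/2} (Σ_j Tr(A_j²))^{1/2}` on `n`-tuples of `k × k` matrices,
applied to differences. -/
def hsDist {n k : ℕ} (x y : Fin n → Mat k) : ℝ :=
  Real.sqrt ((k : ℝ)⁻¹ * (∑ j, Matrix.trace ((x j - y j) * (x j - y j))).re)

section TopDim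
variable {A : Type*} [NormedRing A] [NormedAlgebra ℂ A] [StarRing A] {n m : ℕ}

/-- The norm-microstates of `a₁,…,aₙ` in the presence of `b₁,…,bₘ`, viewed as a subset of
`(M_k)ⁿ`. -/
def GammaTopPresMat (a : Fin n → A) (b : Fin m → A) (k : ℕ) (ε : ℝ) {r : ℕ}
    (P : Fin r → NCPoly (n + m)) : Set (Fin n → Mat k) :=
  (fun C : Fin n → SA k => fun i => (C i).val) '' GammaTopPres a b k ε P

/-- `D_ε(a₁,…,aₙ : b₁,…,bₘ)`, computed with respect to the family of metrics `d` on tuples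
of matrices. -/
def DepsWith (d : ∀ k : ℕ, (Fin n → Mat k) → (Fin n → Mat k) → ℝ)
    (a : Fin n → A) (b : Fin m → A) (ε : ℝ) : EReal :=
  ⨅ (r : ℕ) (P : Fin r → NCPoly (n + m)),
    Filter.atTop.limsup fun k : ℕ =>
      (↑(((k : ℝ) ^ 2)⁻¹) : EReal) *
        ENNReal.log ((coveringNumber (d k) ε (GammaTopPresMat a b k ε P) : ℕ∞) : ℝ≥0∞)

/-- The topological free entropy dimension computed with respect to the family of metrics
`d` on tuples of matrices: `limsup_{ε→0⁺} D_ε / |log ε|`. -/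
def deltaTopWith (d : ∀ k : ℕ, (Fin n → Mat k) → (Fin n → Mat k) → ℝ)
    (a : Fin n → A) (b : Fin m → A) : EReal :=
  Filter.limsup (fun ε : ℝ => (↑|Real.log ε|⁻¹ : EReal) * DepsWith d a b ε)
    (nhdsWithin 0 (Set.Ioi 0))

/-- The topological free entropy dimension `δ_top(a₁,…,aₙ : b₁,…,bₘ)` (for the operator-norm
metric on tuples of matrices). -/
def deltaTopPres (a : Fin n → A) (b : Fin m → A) : EReal :=
  deltaTopWith (fun _ => opDist) a b

/-- The topological free entropy dimension `δ_top(a₁,…,aₙ)`. -/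
def deltaTop (a : Fin n → A) : EReal :=
  deltaTopPres a (fun i : Fin 0 => i.elim0)

/-! ### Semi-microstates -/

/-- The norm-semi-microstates `Γ_top½(a₁,…,aₙ,b₁,…,bₘ; k, ε, P₁,…,P_r)`: only the one-sided
inequalities `‖P_j(C,D)‖ ≤ ‖P_j(a,b)‖ + ε` are required. -/
def GammaTopHalf (a : Fin n → A) (b : Fin m → A) (k : ℕ) (ε : ℝ) {r : ℕ}
    (P : Fin r → NCPoly (n + m)) : Set ((Fin n → SA k) × (Fin m → SA k)) :=
  {CD | ∀ j : Fin r,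
    opNorm ((P j).eval (Fin.append (fun i => (CD.1 i).val) fun i => (CD.2 i).val))
      ≤ ‖(P j).eval (Fin.append a b)‖ + ε}

/-- Norm-semi-microstates of `a₁,…,aₙ` in the presence of `b₁,…,bₘ`. -/
def GammaTopHalfPres (a : Fin n → A) (b : Fin m → A) (k : ℕ) (ε : ℝ) {r : ℕ}
    (P : Fin r → NCPoly (n + m)) : Set (Fin n → SA k) :=
  Prod.fst '' GammaTopHalf a b k ε P

/-- The topological free entropy `χ_top½(a₁,…,aₙ : b₁,…,bₘ)` defined via
norm-semi-microstates. -/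
def chiTopHalfPres (a : Fin n → A) (b : Fin m → A) : EReal :=
  ⨅ (ε : ℝ) (_ : 0 < ε) (r : ℕ) (P : Fin r → NCPoly (n + m)),
    Filter.atTop.limsup fun k : ℕ =>
      (↑(((k : ℝ) ^ 2)⁻¹) : EReal) * ENNReal.log (volume (GammaTopHalfPres a b k ε P))
        + (↑((n : ℝ) / 2 * Real.log k) : EReal)

end TopDim

set_option linter.unusedSectionVars false


/-- Relabeling of variables in noncommutative polynomials. -/
def NCPoly.relabel {N M : ℕ} (σ : Fin N → Fin M) : NCPoly N →ₐ[ℂ] NCPoly M :=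
  FreeAlgebra.lift ℂ (fun i => FreeAlgebra.ι ℂ (σ i))

lemma NCPoly.eval_relabel {N M : ℕ} (σ : Fin N → Fin M) {B : Type*} [Ring B] [Algebra ℂ B]
    (P : NCPoly N) (x : Fin M → B) :
    (NCPoly.relabel σ P).eval x = P.eval (x ∘ σ) := by
  show (FreeAlgebra.lift ℂ x).toRingHom ((NCPoly.relabel σ) P) = (FreeAlgebra.lift ℂ (x ∘ σ)) P
  rw [show ((FreeAlgebra.lift ℂ x).toRingHom ((NCPoly.relabel σ) P) : B)
      = ((FreeAlgebra.lift ℂ x).comp (NCPoly.relabel σ)) P from rfl]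
  congr 1
  apply FreeAlgebra.hom_ext
  funext i
  simp [NCPoly.relabel]

lemma Fin.append_zero_right' {n : ℕ} {B : Type*} (u : Fin n → B) (v : Fin 0 → B) :
    Fin.append u v = u := by
  funext i
  have h : i = Fin.castAdd 0 i := rfl
  rw [h, Fin.append_left]
  rfl

lemma Fin.append_comp_castAdd {n m : ℕ} {B : Type*} (u : Fin n → B) (v : Fin m → B) :
    (Fin.append u v) ∘ (Fin.castAdd m) = u := funext fun i => Fin.append_left u v i

lemma Fin.append_comp_natAdd {n m : ℕ} {B : Type*} (u : Fin n → B) (v : Fin m → B) :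
    (Fin.append u v) ∘ (Fin.natAdd n) = v := funext fun i => Fin.append_right u v i

lemma Fin.eq_append_comp {n m : ℕ} {B : Type*} (f : Fin (n+m) → B) :
    Fin.append (f ∘ Fin.castAdd m) (f ∘ Fin.natAdd n) = f := by
  funext i
  induction i using Fin.addCases with
  | left i => rw [Fin.append_left]; rfl
  | right i => rw [Fin.append_right]; rfl

/-- The swap of the two blocks of indices. -/
def finSwap (n m : ℕ) : Fin (m + n) → Fin (n + m) :=
  fun i => Fin.addCases (fun j => Fin.natAdd n j) (fun j => Fin.castAdd m j) i

lemma Fin.append_comp_finSwap {n m : ℕ} {B : Type*} (u : Fin n → B) (v : Fin m → B) :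
    (Fin.append u v) ∘ finSwap n m = Fin.append v u := by
  funext i
  induction i using Fin.addCases with
  | left j => simp [finSwap, Fin.append_left, Fin.append_right]
  | right j => simp [finSwap, Fin.append_left, Fin.append_right]

section Chunk1
variable {A : Type*} [NormedRing A] [NormedAlgebra ℂ A] [StarRing A] {n m : ℕ}

theorem chiTopPres_le_chiTop (a : Fin n → A) (b : Fin m → A) :
    chiTopPres a b ≤ chiTop a := by
  rw [chiTop, chiTopPres, chiTopPres]
  refine le_iInf fun ε => le_iInf fun hε => le_iInf fun r => le_iInf fun P => ?_
  refine iInf_le_of_le ε <| iInf_le_of_le hε <| iInf_le_of_le r <|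
    iInf_le_of_le (fun j => NCPoly.relabel (fun i : Fin n => Fin.castAdd m i) (P j)) ?_
  refine Filter.limsup_le_limsup (Filter.Eventually.of_forall fun k => ?_)
  refine add_le_add_left (mul_le_mul_of_nonneg_left ?_ ?_) _
  · refine ENNReal.log_monotone (measure_mono ?_)
    rintro C ⟨⟨C', D⟩, hCD, rfl⟩
    refine ⟨(C', fun i : Fin 0 => i.elim0), fun j => ?_, rfl⟩
    have h := hCD j
    rw [NCPoly.eval_relabel, NCPoly.eval_relabel, Fin.append_comp_castAdd,
      Fin.append_comp_castAdd] at h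
    simpa [NCPoly.eval, Fin.append_zero_right'] using h
  · exact EReal.coe_nonneg.2 (by positivity)

end Chunk1

lemma ereal_coe_mul_add (c : ℝ) (hc : 0 ≤ c) (x y : EReal) :
    (c : EReal) * (x + y) = (c : EReal) * x + (c : EReal) * y := by
  rcases eq_or_lt_of_le hc with h0 | hpos
  · simp [← h0]
  have hc' : (0 : EReal) < (c : EReal) := by exact_mod_cast hpos
  induction x with
  | bot => rw [EReal.bot_add, EReal.coe_mul_bot_of_pos hpos, EReal.bot_add]
  | coe x =>
    induction y with
    | bot => rw [EReal.add_bot, EReal.coe_mul_bot_of_pos hpos, EReal.add_bot]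
    | coe y => norm_cast; ring
    | top =>
      rw [EReal.coe_mul_top_of_pos hpos, ← EReal.coe_mul,
        EReal.add_top_of_ne_bot (EReal.coe_ne_bot _), EReal.add_top_of_ne_bot (EReal.coe_ne_bot _),
        EReal.coe_mul_top_of_pos hpos]
  | top =>
    induction y with
    | bot =>
      rw [EReal.add_bot, EReal.coe_mul_bot_of_pos hpos, EReal.coe_mul_top_of_pos hpos,
        EReal.add_bot]
    | coe y =>
      rw [EReal.coe_mul_top_of_pos hpos, ← EReal.coe_mul,
        EReal.top_add_of_ne_bot (EReal.coe_ne_bot _), EReal.top_add_of_ne_bot (EReal.coe_ne_bot _),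
        EReal.coe_mul_top_of_pos hpos]
    | top => rw [EReal.top_add_top, EReal.coe_mul_top_of_pos hpos, EReal.top_add_top]

lemma ereal_le_coe_of_forall_lt {x : EReal} {c : ℝ} (h : ∀ w : ℝ, c < w → x ≤ w) : x ≤ c := by
  by_contra hx
  push_neg at hx
  obtain ⟨w, hw1, hw2⟩ := (EReal.lt_iff_exists_real_btwn).1 hx
  exact absurd (h w (by exact_mod_cast hw1)) (not_le.2 hw2)

lemma ereal_le_bot_of_forall_le {x : EReal} (h : ∀ M : ℝ, x ≤ M) : x ≤ ⊥ := by
  by_contra hx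
  push_neg at hx
  obtain ⟨w, _, hw2⟩ := (EReal.lt_iff_exists_real_btwn).1 hx
  exact absurd (h w) (not_le.2 hw2)

lemma iInf_add_iInf_bot_aux {ι' κ' : Sort*} (i₀ : ι') (j₀ : κ') (f : ι' → EReal) (g : κ' → EReal)
    (hg : ∀ j, g j ≠ ⊤) (hA : (⨅ i, f i) = ⊥) : ⨅ i, ⨅ j, (f i + g j) ≤ ⊥ := by
  refine ereal_le_bot_of_forall_le fun M => ?_
  by_cases hgb : g j₀ = ⊥
  · refine (iInf_le _ i₀).trans ((iInf_le _ j₀).trans ?_)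
    rw [hgb, EReal.add_bot]
    exact bot_le
  · obtain ⟨c, hgj⟩ : ∃ c : ℝ, g j₀ = (c : EReal) :=
      ⟨(g j₀).toReal, (EReal.coe_toReal (hg j₀) hgb).symm⟩
    have hlt : (⨅ i, f i) < ((M - c : ℝ) : EReal) := by
      rw [hA]; exact bot_lt_iff_ne_bot.2 (EReal.coe_ne_bot _)
    obtain ⟨i, hi⟩ := iInf_lt_iff.1 hlt
    refine (iInf_le _ i).trans ((iInf_le _ j₀).trans ?_)
    rw [hgj]
    calc f i + (c : EReal) ≤ ((M - c : ℝ) : EReal) + (c : EReal) :=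
          add_le_add_left hi.le _
      _ = (M : EReal) := by norm_cast; ring

lemma iInf_add_iInf_le {ι κ : Sort*} [Nonempty ι] [Nonempty κ] (f : ι → EReal) (g : κ → EReal)
    (hf : ∀ i, f i ≠ ⊤) (hg : ∀ j, g j ≠ ⊤) :
    ⨅ i, ⨅ j, (f i + g j) ≤ (⨅ i, f i) + ⨅ j, g j := by
  obtain ⟨i₀⟩ := ‹Nonempty ι›
  obtain ⟨j₀⟩ := ‹Nonempty κ›
  rcases eq_or_ne (⨅ i, f i) ⊥ with hA | hA
  · rw [hA, EReal.bot_add]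
    exact iInf_add_iInf_bot_aux i₀ j₀ f g hg hA
  rcases eq_or_ne (⨅ j, g j) ⊥ with hB | hB
  · rw [hB, EReal.add_bot]
    refine le_trans (le_of_eq ?_) (iInf_add_iInf_bot_aux j₀ i₀ g f hf hB)
    rw [iInf_comm]
    exact iInf_congr fun j => iInf_congr fun i => add_comm _ _
  -- both infima are finite
  have hAt : (⨅ i, f i) ≠ ⊤ := fun h => hf i₀ (top_le_iff.1 (h ▸ iInf_le f i₀))
  have hBt : (⨅ j, g j) ≠ ⊤ := fun h => hg j₀ (top_le_iff.1 (h ▸ iInf_le g j₀))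
  obtain ⟨Ar, hAr⟩ : ∃ c : ℝ, (⨅ i, f i) = (c : EReal) :=
    ⟨(⨅ i, f i).toReal, (EReal.coe_toReal hAt hA).symm⟩
  obtain ⟨Br, hBr⟩ : ∃ c : ℝ, (⨅ j, g j) = (c : EReal) :=
    ⟨(⨅ j, g j).toReal, (EReal.coe_toReal hBt hB).symm⟩
  rw [hAr, hBr, ← EReal.coe_add]
  refine ereal_le_coe_of_forall_lt fun w hw => ?_
  set ε : ℝ := (w - (Ar + Br)) / 2 with hε
  have hεpos : 0 < ε := by simp only [hε]; linarith
  have h1 : (⨅ i, f i) < ((Ar + ε : ℝ) : EReal) := by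
    rw [hAr]; exact_mod_cast (by linarith : Ar < Ar + ε)
  have h2 : (⨅ j, g j) < ((Br + ε : ℝ) : EReal) := by
    rw [hBr]; exact_mod_cast (by linarith : Br < Br + ε)
  obtain ⟨i, hi⟩ := iInf_lt_iff.1 h1
  obtain ⟨j, hj⟩ := iInf_lt_iff.1 h2
  refine (iInf_le _ i).trans ((iInf_le _ j).trans ?_)
  calc f i + g j ≤ ((Ar + ε : ℝ) : EReal) + ((Br + ε : ℝ) : EReal) :=
        add_le_add hi.le hj.le
    _ = ((w : ℝ) : EReal) := by norm_cast; simp only [hε]; ring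

namespace SA
variable {k : ℕ}

lemma norm_sq_eq (A : SA k) : ‖A‖ ^ 2 = ∑ i, ∑ j, Complex.normSq (A.val j i) := by
  rw [← real_inner_self_eq_norm_sq]
  rw [show inner ℝ A A = (Matrix.trace (A.val * A.val)).re from rfl, trace_sq]
  simp

lemma col_sum_le (M : Mat k) (j : Fin k) :
    ∑ i, Complex.normSq (M i j) ≤ opNorm M ^ 2 := by
  have hv : ‖(EuclideanSpace.single j (1 : ℂ) : EuclideanSpace ℂ (Fin k))‖ = 1 := by
    rw [EuclideanSpace.norm_single]; norm_num
  have hb := (Matrix.toEuclideanCLM (𝕜 := ℂ) M).le_opNorm (EuclideanSpace.single j (1 : ℂ))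
  rw [hv, mul_one] at hb
  have happ : (Matrix.toEuclideanCLM (𝕜 := ℂ) M) (EuclideanSpace.single j (1 : ℂ))
      = (WithLp.equiv 2 (Fin k → ℂ)).symm (M.mulVec (Pi.single j (1 : ℂ))) := rfl
  have hnorm : ‖(Matrix.toEuclideanCLM (𝕜 := ℂ) M) (EuclideanSpace.single j (1 : ℂ))‖ ^ 2
      = ∑ i, Complex.normSq (M i j) := by
    rw [happ, EuclideanSpace.norm_eq, Real.sq_sqrt (by positivity)]
    congr 1
    funext i
    simp only [WithLp.equiv_symm_apply, PiLp.toLp_apply, Matrix.mulVec_single, MulOpposite.op_one,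
      one_smul, Matrix.col_apply, Complex.sq_norm]
  calc ∑ i, Complex.normSq (M i j)
      = ‖(Matrix.toEuclideanCLM (𝕜 := ℂ) M) (EuclideanSpace.single j (1 : ℂ))‖ ^ 2 := hnorm.symm
    _ ≤ opNorm M ^ 2 := pow_le_pow_left₀ (norm_nonneg _) hb 2

lemma opNorm_nonneg (M : Mat k) : 0 ≤ opNorm M := norm_nonneg _

lemma norm_le_sqrt_mul_opNorm (A : SA k) : ‖A‖ ≤ Real.sqrt k * opNorm A.val := by
  have h1 : ‖A‖ ^ 2 ≤ (k : ℝ) * opNorm A.val ^ 2 := by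
    rw [norm_sq_eq]
    calc ∑ i, ∑ j, Complex.normSq (A.val j i)
        ≤ ∑ _i : Fin k, opNorm A.val ^ 2 :=
          Finset.sum_le_sum fun i _ => col_sum_le A.val i
      _ = (k : ℝ) * opNorm A.val ^ 2 := by simp [mul_comm]
  have h2 : ‖A‖ ≤ Real.sqrt ((k : ℝ) * opNorm A.val ^ 2) := by
    rw [← Real.sqrt_sq (norm_nonneg A)]
    exact Real.sqrt_le_sqrt h1
  calc ‖A‖ ≤ Real.sqrt ((k : ℝ) * opNorm A.val ^ 2) := h2
    _ = Real.sqrt k * opNorm A.val := by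
        rw [Real.sqrt_mul (Nat.cast_nonneg k), Real.sqrt_sq (opNorm_nonneg _)]

lemma nontrivial_of_pos (hk : 0 < k) : Nontrivial (SA k) := by
  refine ⟨⟨⟨1, star_one _⟩, 0, fun h => ?_⟩⟩
  have hval : (1 : Mat k) = (0 : Mat k) := congrArg SA.val h
  have := congrFun (congrFun hval ⟨0, hk⟩) ⟨0, hk⟩
  simp [Matrix.one_apply] at this

/-- The real-linear equivalence `SA k × SA k ≃ Mat k`, `(H, K) ↦ H + i K`. -/
def matEquiv (k : ℕ) : (SA k × SA k) ≃ₗ[ℝ] Mat k where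
  toFun p := p.1.val + Complex.I • p.2.val
  map_add' p q := by
    show (p.1.val + q.1.val) + Complex.I • (p.2.val + q.2.val) = _
    rw [smul_add]; abel
  map_smul' r p := by
    show (r • p.1.val) + Complex.I • (r • p.2.val) = r • (p.1.val + Complex.I • p.2.val)
    rw [smul_comm, smul_add]
  invFun A := (⟨(2⁻¹ : ℝ) • (A + Aᴴ), by
      rw [star_smul, star_trivial, star_add, Matrix.star_eq_conjTranspose,
        Matrix.star_eq_conjTranspose, Matrix.conjTranspose_conjTranspose, add_comm]⟩,
    ⟨(2⁻¹ : ℝ) • (Complex.I • (Aᴴ - A)), by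
      rw [star_smul, star_trivial, star_smul, star_sub, Matrix.star_eq_conjTranspose,
        Matrix.star_eq_conjTranspose, Matrix.conjTranspose_conjTranspose, Complex.star_def,
        Complex.conj_I, neg_smul, ← smul_neg, neg_sub]⟩)
  left_inv p := by
    obtain ⟨H, K⟩ := p
    have hstar : (H.val + Complex.I • K.val)ᴴ = H.val - Complex.I • K.val := by
      show star _ = _
      rw [star_add, H.isSA, star_smul, K.isSA, Complex.star_def, Complex.conj_I, neg_smul,
        ← sub_eq_add_neg]
    ext : 2 <;> simp only [hstar]
    · show (2⁻¹ : ℝ) • (H.val + Complex.I • K.val + (H.val - Complex.I • K.val)) = H.val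
      match_scalars <;> push_cast <;> ring
    · show (2⁻¹ : ℝ) • (Complex.I • (H.val - Complex.I • K.val - (H.val + Complex.I • K.val)))
        = K.val
      have h2 : H.val - Complex.I • K.val - (H.val + Complex.I • K.val)
          = (-2 : ℂ) • (Complex.I • K.val) := by module
      rw [h2, smul_smul, smul_smul, show Complex.I * -2 * Complex.I = (2 : ℂ) by
        rw [show Complex.I * (-2 : ℂ) * Complex.I = (-2) * (Complex.I * Complex.I) by ring,
          Complex.I_mul_I]; norm_num]
      match_scalars
      push_cast
      norm_num
  right_inv A := by
    show (2⁻¹ : ℝ) • (A + Aᴴ) + Complex.I • ((2⁻¹ : ℝ) • (Complex.I • (Aᴴ - A))) = A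
    rw [smul_comm, smul_smul, Complex.I_mul_I, neg_one_smul, neg_sub]
    module

lemma finrank_eq (k : ℕ) : Module.finrank ℝ (SA k) = k ^ 2 := by
  have h1 := (matEquiv k).finrank_eq
  rw [Module.finrank_prod] at h1
  have h2 : Module.finrank ℝ (Mat k) = Fintype.card (Fin k) * Fintype.card (Fin k) *
      Module.finrank ℝ ℂ := Module.finrank_matrix (R := ℝ) (M := ℂ) (Fin k) (Fin k)
  rw [Complex.finrank_real_complex, Fintype.card_fin] at h2
  have h3 : Module.finrank ℝ (SA k) + Module.finrank ℝ (SA k) = k * k * 2 := by rw [h1, h2]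
  nlinarith [h3]

end SA

/-- Core Stirling-type estimate: `k² log k − log Γ(k²/2 + 1) ≤ (2 + log 2) k²` for `k ≥ 4`. -/
lemma gamma_log_bound {k : ℕ} (hk : 4 ≤ k) :
    (k : ℝ) ^ 2 * Real.log k - Real.log (Real.Gamma ((k : ℝ) ^ 2 / 2 + 1))
      ≤ (2 + Real.log 2) * (k : ℝ) ^ 2 := by
  set d : ℕ := k ^ 2 with hd
  set q : ℕ := d / 2 with hq
  have hd16 : 16 ≤ d := by
    have : 4 * 4 ≤ k * k := Nat.mul_le_mul hk hk
    simpa [hd, pow_two] using this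
  have hq8 : 8 ≤ q := by omega
  have hdq : d ≤ 2 * q + 1 := by omega
  have hqd : 2 * q ≤ d := by omega
  have hdr : ((d : ℕ) : ℝ) = (k : ℝ) ^ 2 := by push_cast [hd]; ring
  have hcast1 : ((2 * q : ℕ) : ℝ) ≤ ((d : ℕ) : ℝ) := Nat.cast_le.mpr hqd
  have hcast2 : ((d : ℕ) : ℝ) ≤ ((2 * q + 1 : ℕ) : ℝ) := Nat.cast_le.mpr hdq
  push_cast at hcast1 hcast2
  have hq_le : (q : ℝ) ≤ (k : ℝ) ^ 2 / 2 := by rw [← hdr]; linarith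
  have hq_ge : (k : ℝ) ^ 2 - 1 ≤ 2 * (q : ℝ) := by rw [← hdr]; linarith
  have h16 : (16 : ℝ) ≤ (k : ℝ) ^ 2 := by rw [← hdr]; exact_mod_cast hd16
  have hq8' : (8 : ℝ) ≤ (q : ℝ) := by exact_mod_cast hq8
  -- Γ monotonicity
  have hG1 : Real.Gamma ((q : ℝ) + 1) ≤ Real.Gamma ((k : ℝ) ^ 2 / 2 + 1) := by
    rcases eq_or_lt_of_le (show (q : ℝ) + 1 ≤ (k : ℝ) ^ 2 / 2 + 1 by linarith) with h | h
    · rw [h]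
    · exact (Real.Gamma_strictMonoOn_Ici (Set.mem_Ici.mpr (by linarith))
        (Set.mem_Ici.mpr (by linarith)) h).le
  have hG2 : Real.Gamma ((q : ℝ) + 1) = (Nat.factorial q : ℝ) := Real.Gamma_nat_eq_factorial q
  -- factorial lower bound : q^q ≤ q! * exp q
  have hfac : (q : ℝ) ^ q ≤ Real.exp q * (Nat.factorial q : ℝ) := by
    have hsum := Real.sum_le_exp_of_nonneg (x := (q : ℝ)) (Nat.cast_nonneg q) (q + 1)
    have hterm : (q : ℝ) ^ q / (Nat.factorial q : ℝ) ≤ Real.exp q := by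
      refine le_trans ?_ hsum
      refine Finset.single_le_sum (f := fun i => (q : ℝ) ^ i / (Nat.factorial i : ℝ))
        (fun i _ => by positivity) ?_
      simp
    rw [div_le_iff₀ (by positivity)] at hterm
    exact hterm
  have hfacpos : (0 : ℝ) < (Nat.factorial q : ℝ) := by positivity
  have hqpos : (0 : ℝ) < (q : ℝ) := by positivity
  have hlogfac : (q : ℝ) * Real.log q - (q : ℝ) ≤ Real.log (Nat.factorial q) := by
    have h1 : Real.log ((q : ℝ) ^ q) ≤ Real.log (Real.exp q * (Nat.factorial q : ℝ)) :=
      Real.log_le_log (by positivity) hfac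
    rw [Real.log_pow, Real.log_mul (Real.exp_pos _).ne' (ne_of_gt hfacpos),
      Real.log_exp] at h1
    linarith
  have hGpos : 0 < Real.Gamma ((k : ℝ) ^ 2 / 2 + 1) := Real.Gamma_pos_of_pos (by positivity)
  have hlogG : (q : ℝ) * Real.log q - (q : ℝ) ≤ Real.log (Real.Gamma ((k : ℝ) ^ 2 / 2 + 1)) := by
    refine hlogfac.trans ?_
    refine Real.log_le_log hfacpos ?_
    rw [← hG2]; exact hG1
  -- log q ≥ 2 log k - log 4
  have hk1 : (1 : ℝ) ≤ (k : ℝ) := by exact_mod_cast by omega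
  have hlogk0 : 0 ≤ Real.log k := Real.log_nonneg hk1
  have hq_quarter : (k : ℝ) ^ 2 / 4 ≤ (q : ℝ) := by linarith
  have hlogq : 2 * Real.log k - Real.log 4 ≤ Real.log q := by
    have h1 : Real.log ((k : ℝ) ^ 2 / 4) ≤ Real.log q :=
      Real.log_le_log (by positivity) hq_quarter
    rw [Real.log_div (by positivity) (by norm_num), Real.log_pow] at h1
    push_cast at h1
    linarith
  have hlog4 : Real.log 4 = 2 * Real.log 2 := by
    rw [show (4 : ℝ) = 2 ^ 2 by norm_num, Real.log_pow]
    push_cast; ring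
  have hlogk_le : Real.log k ≤ (k : ℝ) ^ 2 := by
    have := Real.log_le_self (by positivity : (0:ℝ) ≤ (k:ℝ))
    nlinarith [this, hk1]
  have hlog2 : (0:ℝ) ≤ Real.log 2 := Real.log_nonneg (by norm_num)
  -- assemble
  have hmul1 : (q : ℝ) * (2 * Real.log k - Real.log 4) ≤ (q : ℝ) * Real.log q :=
    mul_le_mul_of_nonneg_left hlogq (le_of_lt hqpos)
  have hmul2 : ((k : ℝ) ^ 2 - 1) * Real.log k ≤ 2 * (q : ℝ) * Real.log k :=
    mul_le_mul_of_nonneg_right hq_ge hlogk0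
  have hmul3 : (q : ℝ) * Real.log 4 ≤ ((k : ℝ) ^ 2 / 2) * Real.log 4 :=
    mul_le_mul_of_nonneg_right hq_le (by rw [hlog4]; linarith)
  nlinarith [hlogG, hmul1, hmul2, hmul3, hq_le, hlogk_le, hlog2]

section Bound
variable {A : Type*} [NormedRing A] [NormedAlgebra ℂ A] [StarRing A] {n m : ℕ}

/-- Augment a family of polynomials with the degree-one monomials bounding the first block of
variables. -/
def augmentFam (P : Fin (r : ℕ) → NCPoly (n + m)) : Fin (r + n) → NCPoly (n + m) :=
  Fin.append P (fun i => FreeAlgebra.ι ℂ (Fin.castAdd m i))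

lemma gammaTopPres_augment_subset (a : Fin n → A) (b : Fin m → A) (k : ℕ) (ε : ℝ)
    {r : ℕ} (P : Fin r → NCPoly (n + m)) :
    GammaTopPres a b k ε (augmentFam P) ⊆
      Set.univ.pi (fun i : Fin n =>
        Metric.closedBall (0 : SA k) (Real.sqrt k * ((∑ i', ‖a i'‖) + ε))) := by
  rintro C ⟨⟨C', D⟩, hCD, rfl⟩
  intro i _
  have h := hCD (Fin.natAdd r i)
  rw [show augmentFam P (Fin.natAdd r i) = FreeAlgebra.ι ℂ (Fin.castAdd m i) from
    Fin.append_right _ _ i] at h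
  rw [show NCPoly.eval (FreeAlgebra.ι ℂ (Fin.castAdd m i))
        (Fin.append (fun i' => (C' i').val) (fun i' => (D i').val)) = (C' i).val by
      rw [NCPoly.eval, FreeAlgebra.lift_ι_apply, Fin.append_left],
    show NCPoly.eval (FreeAlgebra.ι ℂ (Fin.castAdd m i)) (Fin.append a b) = a i by
      rw [NCPoly.eval, FreeAlgebra.lift_ι_apply, Fin.append_left]] at h
  have hop : opNorm (C' i).val ≤ ‖a i‖ + ε := by
    have := (abs_le.1 h).2
    linarith
  have hsum : ‖a i‖ + ε ≤ (∑ i', ‖a i'‖) + ε := by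
    have : ‖a i‖ ≤ ∑ i', ‖a i'‖ :=
      Finset.single_le_sum (f := fun i' => ‖a i'‖) (fun _ _ => norm_nonneg _) (Finset.mem_univ i)
    linarith
  rw [Metric.mem_closedBall, dist_zero_right]
  calc ‖C' i‖ ≤ Real.sqrt k * opNorm (C' i).val := SA.norm_le_sqrt_mul_opNorm _
    _ ≤ Real.sqrt k * ((∑ i', ‖a i'‖) + ε) :=
        mul_le_mul_of_nonneg_left (hop.trans hsum) (Real.sqrt_nonneg _)

/-- Uniform upper bound for the entropy terms of an augmented family. -/
lemma limsup_augment_le (a : Fin n → A) (b : Fin m → A) {ε : ℝ} (hε : 0 < ε)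
    {r : ℕ} (P : Fin r → NCPoly (n + m)) :
    Filter.atTop.limsup (fun k : ℕ =>
        (↑(((k : ℝ) ^ 2)⁻¹) : EReal) * ENNReal.log (volume (GammaTopPres a b k ε (augmentFam P)))
          + (↑((n : ℝ) / 2 * Real.log k) : EReal))
      ≤ ((n * (Real.log ((∑ i', ‖a i'‖) + ε) + Real.log (Real.sqrt Real.pi) + 2 + Real.log 2) :
          ℝ) : EReal) := by
  set Rb : ℝ := (∑ i', ‖a i'‖) + ε with hRb
  have hRbpos : 0 < Rb := by
    have : (0:ℝ) ≤ ∑ i', ‖a i'‖ := Finset.sum_nonneg fun _ _ => norm_nonneg _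
    linarith
  refine Filter.limsup_le_of_le (by isBoundedDefault) ?_
  rw [Filter.eventually_atTop]
  refine ⟨4, fun k hk => ?_⟩
  have hk0 : 0 < k := by omega
  haveI : Nontrivial (SA k) := SA.nontrivial_of_pos hk0
  have hc0 : (0:ℝ) ≤ ((k : ℝ) ^ 2)⁻¹ := by positivity
  -- the ball volume
  have hsqrtk : (0:ℝ) < Real.sqrt k := Real.sqrt_pos.2 (by exact_mod_cast hk0)
  set G : ℝ := Real.Gamma ((k : ℝ) ^ 2 / 2 + 1) with hG
  have hGpos : 0 < G := Real.Gamma_pos_of_pos (by positivity)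
  set x : ℝ := (Real.sqrt k * Rb) ^ (k ^ 2) * (Real.sqrt Real.pi ^ (k ^ 2) / G) with hx
  have hxpos : 0 < x := by
    have : (0:ℝ) < Real.sqrt Real.pi := Real.sqrt_pos.2 Real.pi_pos
    positivity
  have hcast : ((k ^ 2 : ℕ) : ℝ) = (k : ℝ) ^ 2 := by push_cast; ring
  have h1 : ENNReal.ofReal x = (ENNReal.ofReal (Real.sqrt k * Rb)) ^ (k ^ 2)
      * ENNReal.ofReal (Real.sqrt Real.pi ^ (k ^ 2) / G) := by
    rw [hx, ENNReal.ofReal_mul (by positivity), ENNReal.ofReal_pow (by positivity)]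
  have hball : volume (Metric.closedBall (0 : SA k) (Real.sqrt k * Rb)) = ENNReal.ofReal x := by
    rw [InnerProductSpace.volume_closedBall, SA.finrank_eq, h1, hcast]
  have hvol : volume (GammaTopPres a b k ε (augmentFam P)) ≤ (ENNReal.ofReal x) ^ n := by
    refine (measure_mono (gammaTopPres_augment_subset a b k ε P)).trans ?_
    rw [volume_pi_pi]
    rw [← hRb]
    simp [hball]
  -- take logs
  have hlog : ENNReal.log (volume (GammaTopPres a b k ε (augmentFam P)))
      ≤ ((n * Real.log x : ℝ) : EReal) := by
    refine (ENNReal.log_monotone hvol).trans ?_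
    rw [ENNReal.log_pow, ENNReal.log_ofReal_of_pos hxpos]
    exact le_of_eq (by norm_cast)
  have hmono : (↑(((k : ℝ) ^ 2)⁻¹) : EReal) *
        ENNReal.log (volume (GammaTopPres a b k ε (augmentFam P)))
      ≤ ((((k : ℝ) ^ 2)⁻¹ * (n * Real.log x) : ℝ) : EReal) := by
    calc (↑(((k : ℝ) ^ 2)⁻¹) : EReal) *
          ENNReal.log (volume (GammaTopPres a b k ε (augmentFam P)))
        ≤ (↑(((k : ℝ) ^ 2)⁻¹) : EReal) * ((n * Real.log x : ℝ) : EReal) :=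
          mul_le_mul_of_nonneg_left hlog (by exact_mod_cast hc0)
      _ = ((((k : ℝ) ^ 2)⁻¹ * (n * Real.log x) : ℝ) : EReal) := by rw [← EReal.coe_mul]
  refine le_trans (add_le_add_left hmono _) ?_
  rw [← EReal.coe_add, EReal.coe_le_coe_iff]
  -- now a real inequality
  have hkR : (0:ℝ) < (k:ℝ) ^ 2 := by positivity
  have hxlog : Real.log x = (k:ℝ)^2 * Real.log (Real.sqrt k * Rb)
      + ((k:ℝ)^2 * Real.log (Real.sqrt Real.pi) - Real.log G) := by
    rw [hx, Real.log_mul (by positivity) (by positivity), Real.log_pow,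
      Real.log_div (by positivity) (ne_of_gt hGpos), Real.log_pow]
    push_cast; ring
  have hsplit : Real.log (Real.sqrt k * Rb) = Real.log k / 2 + Real.log Rb := by
    rw [Real.log_mul (ne_of_gt hsqrtk) (ne_of_gt hRbpos), Real.log_sqrt (Nat.cast_nonneg k)]
  have hgamma := gamma_log_bound hk
  -- divide gamma bound by k^2
  have hgamma' : Real.log k - ((k:ℝ)^2)⁻¹ * Real.log G ≤ 2 + Real.log 2 := by
    have h1 : ((k:ℝ)^2)⁻¹ * ((k : ℝ) ^ 2 * Real.log k - Real.log G)
        ≤ ((k:ℝ)^2)⁻¹ * ((2 + Real.log 2) * (k : ℝ) ^ 2) :=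
      mul_le_mul_of_nonneg_left hgamma hc0
    have hinv0 : ((k:ℝ)^2)⁻¹ * (k:ℝ)^2 = 1 := inv_mul_cancel₀ (ne_of_gt hkR)
    have e1 : ((k:ℝ)^2)⁻¹ * ((k : ℝ) ^ 2 * Real.log k - Real.log G)
        = Real.log k - ((k:ℝ)^2)⁻¹ * Real.log G := by
      linear_combination Real.log (k:ℝ) * hinv0
    have e2 : ((k:ℝ)^2)⁻¹ * ((2 + Real.log 2) * (k : ℝ) ^ 2) = 2 + Real.log 2 := by
      linear_combination (2 + Real.log 2) * hinv0
    rw [e1, e2] at h1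
    exact h1
  have hinv : ((k:ℝ)^2)⁻¹ * (k:ℝ)^2 = 1 := inv_mul_cancel₀ (ne_of_gt hkR)
  have hxdiv : ((k:ℝ)^2)⁻¹ * Real.log x
      = Real.log k / 2 + Real.log Rb + Real.log (Real.sqrt Real.pi)
        - ((k:ℝ)^2)⁻¹ * Real.log G := by
    rw [hxlog, hsplit]
    linear_combination (Real.log (k:ℝ) / 2 + Real.log Rb + Real.log (Real.sqrt Real.pi)) * hinv
  have hn0 : (0:ℝ) ≤ (n:ℝ) := Nat.cast_nonneg n
  calc ((k:ℝ)^2)⁻¹ * ((n:ℝ) * Real.log x) + (n:ℝ)/2 * Real.log k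
      = (n:ℝ) * (((k:ℝ)^2)⁻¹ * Real.log x) + (n:ℝ)/2 * Real.log k := by ring
    _ = (n:ℝ) * (Real.log Rb + Real.log (Real.sqrt Real.pi)
          + (Real.log k - ((k:ℝ)^2)⁻¹ * Real.log G)) := by rw [hxdiv]; ring
    _ ≤ (n:ℝ) * (Real.log Rb + Real.log (Real.sqrt Real.pi) + (2 + Real.log 2)) :=
        mul_le_mul_of_nonneg_left (by linarith [hgamma']) hn0
    _ = (n:ℝ) * (Real.log Rb + Real.log (Real.sqrt Real.pi) + 2 + Real.log 2) := by ring

end Bound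

section Split
variable {n m k : ℕ}

/-- The splitting map `(Fin (n+m) → SA k) → (Fin n → SA k) × (Fin m → SA k)`. -/
def splitMap (n m k : ℕ) (C : Fin (n + m) → SA k) : (Fin n → SA k) × (Fin m → SA k) :=
  (fun i => C (Fin.castAdd m i), fun j => C (Fin.natAdd n j))

/-- The splitting map as a measurable equivalence. -/
def splitEquiv (n m k : ℕ) : (Fin (n + m) → SA k) ≃ᵐ ((Fin n → SA k) × (Fin m → SA k)) :=
  (MeasurableEquiv.piCongrLeft (fun _ : Fin (n + m) => SA k) finSumFinEquiv).symm.trans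
    (MeasurableEquiv.sumPiEquivProdPi (fun _ : Fin n ⊕ Fin m => SA k))

lemma splitEquiv_coe : ⇑(splitEquiv n m k) = splitMap n m k := by
  funext C
  refine Prod.ext ?_ ?_ <;> funext i <;>
    simp [splitEquiv, splitMap, MeasurableEquiv.sumPiEquivProdPi,
      MeasurableEquiv.piCongrLeft, Equiv.piCongrLeft]

lemma splitMap_measurePreserving :
    MeasurePreserving (splitMap n m k) (volume : Measure (Fin (n + m) → SA k)) volume := by
  rw [← splitEquiv_coe]
  have h1 := (volume_measurePreserving_piCongrLeft (fun _ : Fin (n + m) => SA k)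
    finSumFinEquiv).symm _
  have h2 := (volume_measurePreserving_sumPiEquivProdPi_symm
    (fun _ : Fin n ⊕ Fin m => SA k)).symm _
  exact h2.comp h1

lemma volume_split_le (S₁ : Set (Fin n → SA k)) (S₂ : Set (Fin m → SA k))
    (W : Set (Fin (n + m) → SA k)) (hW : W ⊆ splitMap n m k ⁻¹' (S₁ ×ˢ S₂)) :
    volume W ≤ volume S₁ * volume S₂ := by
  set T₁ := toMeasurable volume S₁ with hT₁
  set T₂ := toMeasurable volume S₂ with hT₂
  have hsub : W ⊆ splitMap n m k ⁻¹' (T₁ ×ˢ T₂) := by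
    refine hW.trans (Set.preimage_mono ?_)
    exact Set.prod_mono (subset_toMeasurable _ _) (subset_toMeasurable _ _)
  calc volume W ≤ volume (splitMap n m k ⁻¹' (T₁ ×ˢ T₂)) := measure_mono hsub
    _ = volume (T₁ ×ˢ T₂) := by
        refine (splitMap_measurePreserving).measure_preimage ?_
        exact ((measurableSet_toMeasurable _ _).prod
          (measurableSet_toMeasurable _ _)).nullMeasurableSet
    _ = volume T₁ * volume T₂ := by
        rw [show (volume : Measure ((Fin n → SA k) × (Fin m → SA k))) = volume.prod volume from rfl,
          Measure.prod_prod]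
    _ = volume S₁ * volume S₂ := by
        rw [hT₁, hT₂, measure_toMeasurable, measure_toMeasurable]

end Split

lemma comp_finSwap_eq {n m : ℕ} {B : Type*} (g : Fin (n + m) → B) :
    g ∘ finSwap n m = Fin.append (g ∘ Fin.natAdd n) (g ∘ Fin.castAdd m) := by
  funext i
  induction i using Fin.addCases with
  | left j => simp [finSwap, Fin.append_left]
  | right j => simp [finSwap, Fin.append_right]

section Combined
variable {A : Type*} [NormedRing A] [NormedAlgebra ℂ A] [StarRing A] {n m : ℕ}

/-- The combined family of polynomials for the product estimate. -/
def combinedFam {r s : ℕ} (P : Fin r → NCPoly (n + m)) (Q : Fin s → NCPoly (m + n)) :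
    Fin (r + s) → NCPoly (n + m + 0) :=
  Fin.append P (fun j => NCPoly.relabel (finSwap n m) (Q j))

lemma gammaTopPres_combined_subset (a : Fin n → A) (b : Fin m → A) (k : ℕ)
    {ε₀ ε ε' : ℝ} (hε : ε₀ ≤ ε) (hε' : ε₀ ≤ ε')
    {r s : ℕ} (P : Fin r → NCPoly (n + m)) (Q : Fin s → NCPoly (m + n)) :
    GammaTopPres (Fin.append a b) (fun i : Fin 0 => i.elim0) k ε₀ (combinedFam P Q) ⊆
      splitMap n m k ⁻¹' ((GammaTopPres a b k ε P) ×ˢ (GammaTopPres b a k ε' Q)) := by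
  rintro C ⟨⟨C', D0⟩, hCD, rfl⟩
  have hX : Fin.append (fun i => (C' i).val) (fun i => (D0 i).val) = fun i => (C' i).val :=
    Fin.append_zero_right' _ _
  have hab : Fin.append (Fin.append a b) (fun i : Fin 0 => i.elim0) = Fin.append a b :=
    Fin.append_zero_right' _ _
  have hval : (fun i => (C' i).val)
      = Fin.append ((fun i => (C' i).val) ∘ Fin.castAdd m) ((fun i => (C' i).val) ∘ Fin.natAdd n) :=
    (Fin.eq_append_comp _).symm
  constructor
  · -- first block
    refine ⟨(fun i => C' (Fin.castAdd m i), fun j => C' (Fin.natAdd n j)), fun j => ?_, rfl⟩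
    show |opNorm ((P j).eval (Fin.append (fun i => (C' (Fin.castAdd m i)).val)
        (fun j' => (C' (Fin.natAdd n j')).val))) - ‖(P j).eval (Fin.append a b)‖| ≤ ε
    have h0 := hCD (Fin.castAdd s j)
    rw [show combinedFam P Q (Fin.castAdd s j) = P j from Fin.append_left _ _ j, hX, hab] at h0
    have h1 : |opNorm ((P j).eval (fun i => (C' i).val))
        - ‖(P j).eval (Fin.append a b)‖| ≤ ε₀ := h0
    rw [show Fin.append (fun i => (C' (Fin.castAdd m i)).val)
        (fun j' => (C' (Fin.natAdd n j')).val) = (fun i => (C' i).val) from by rw [hval]; rfl]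
    exact le_trans h1 hε
  · -- second block
    refine ⟨(fun j => C' (Fin.natAdd n j), fun i => C' (Fin.castAdd m i)), fun j => ?_, rfl⟩
    show |opNorm ((Q j).eval (Fin.append (fun j' => (C' (Fin.natAdd n j')).val)
        (fun i => (C' (Fin.castAdd m i)).val))) - ‖(Q j).eval (Fin.append b a)‖| ≤ ε'
    have h0 := hCD (Fin.natAdd r j)
    rw [show combinedFam P Q (Fin.natAdd r j) = NCPoly.relabel (finSwap n m) (Q j) from
      Fin.append_right _ _ j, hX, hab] at h0
    have h1 : |opNorm ((NCPoly.relabel (finSwap n m) (Q j)).eval (fun i => (C' i).val))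
        - ‖(NCPoly.relabel (finSwap n m) (Q j)).eval (Fin.append a b)‖| ≤ ε₀ := h0
    rw [NCPoly.eval_relabel, NCPoly.eval_relabel,
      show (Fin.append a b) ∘ finSwap n m = Fin.append b a from Fin.append_comp_finSwap a b,
      comp_finSwap_eq (fun i => (C' i).val)] at h1
    rw [show Fin.append (fun j' => (C' (Fin.natAdd n j')).val)
        (fun i => (C' (Fin.castAdd m i)).val)
        = Fin.append ((fun i => (C' i).val) ∘ Fin.natAdd n)
            ((fun i => (C' i).val) ∘ Fin.castAdd m) from rfl]
    exact le_trans h1 hε'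

lemma volume_combined_le (a : Fin n → A) (b : Fin m → A) (k : ℕ)
    {ε₀ ε ε' : ℝ} (hε : ε₀ ≤ ε) (hε' : ε₀ ≤ ε')
    {r s : ℕ} (P : Fin r → NCPoly (n + m)) (Q : Fin s → NCPoly (m + n)) :
    volume (GammaTopPres (Fin.append a b) (fun i : Fin 0 => i.elim0) k ε₀ (combinedFam P Q))
      ≤ volume (GammaTopPres a b k ε P) * volume (GammaTopPres b a k ε' Q) :=
  volume_split_le _ _ _ (gammaTopPres_combined_subset a b k hε hε' P Q)

/-- Monotonicity under augmentation. -/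
lemma gammaTopPres_augment_mono (a : Fin n → A) (b : Fin m → A) (k : ℕ) (ε : ℝ)
    {r : ℕ} (P : Fin r → NCPoly (n + m)) :
    GammaTopPres a b k ε (augmentFam P) ⊆ GammaTopPres a b k ε P := by
  rintro C ⟨CD, hCD, rfl⟩
  refine ⟨CD, fun j => ?_, rfl⟩
  have h := hCD (Fin.castAdd n j)
  rwa [show augmentFam P (Fin.castAdd n j) = P j from Fin.append_left _ _ j] at h

end Combined

/-- A package of data indexing the infima in `chiTopPres`. -/
structure PolyPack (n m : ℕ) : Type where
  ε : ℝ
  hε : 0 < ε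
  r : ℕ
  P : Fin r → NCPoly (n + m)

instance (n m : ℕ) : Nonempty (PolyPack n m) := ⟨⟨1, one_pos, 0, Fin.elim0⟩⟩

section Main
variable {A : Type*} [NormedRing A] [NormedAlgebra ℂ A] [StarRing A] {n m : ℕ}

theorem chiTop_append_le (a : Fin n → A) (b : Fin m → A) :
    chiTop (Fin.append a b) ≤ chiTopPres a b + chiTopPres b a := by
  set F : PolyPack n m → EReal := fun p =>
    Filter.atTop.limsup fun k : ℕ =>
      (↑(((k : ℝ) ^ 2)⁻¹) : EReal) *
          ENNReal.log (volume (GammaTopPres a b k p.ε (augmentFam p.P)))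
        + (↑((n : ℝ) / 2 * Real.log k) : EReal) with hF
  set G : PolyPack m n → EReal := fun q =>
    Filter.atTop.limsup fun k : ℕ =>
      (↑(((k : ℝ) ^ 2)⁻¹) : EReal) *
          ENNReal.log (volume (GammaTopPres b a k q.ε (augmentFam q.P)))
        + (↑((m : ℝ) / 2 * Real.log k) : EReal) with hG
  have hFtop : ∀ p, F p ≠ ⊤ := fun p =>
    ((limsup_augment_le a b p.hε p.P).trans_lt (EReal.coe_lt_top _)).ne
  have hGtop : ∀ q, G q ≠ ⊤ := fun q =>
    ((limsup_augment_le b a q.hε q.P).trans_lt (EReal.coe_lt_top _)).ne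
  have hkey : ∀ p q, chiTop (Fin.append a b) ≤ F p + G q := by
    intro p q
    set ε₀ : ℝ := min p.ε q.ε with hε₀
    have hε₀pos : 0 < ε₀ := lt_min p.hε q.hε
    have hstep : chiTop (Fin.append a b) ≤ Filter.atTop.limsup fun k : ℕ =>
        (↑(((k : ℝ) ^ 2)⁻¹) : EReal) * ENNReal.log (volume (GammaTopPres (Fin.append a b)
            (fun i : Fin 0 => i.elim0) k ε₀ (combinedFam (augmentFam p.P) (augmentFam q.P))))
          + (↑(((n + m : ℕ) : ℝ) / 2 * Real.log k) : EReal) := by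
      rw [chiTop, chiTopPres]
      exact iInf_le_of_le ε₀ <| iInf_le_of_le hε₀pos <| iInf_le_of_le _ <| iInf_le_of_le
        (combinedFam (augmentFam p.P) (augmentFam q.P)) le_rfl
    refine hstep.trans ?_
    set u : ℕ → EReal := fun k =>
      (↑(((k : ℝ) ^ 2)⁻¹) : EReal) *
          ENNReal.log (volume (GammaTopPres a b k p.ε (augmentFam p.P)))
        + (↑((n : ℝ) / 2 * Real.log k) : EReal) with hu
    set v : ℕ → EReal := fun k =>
      (↑(((k : ℝ) ^ 2)⁻¹) : EReal) *
          ENNReal.log (volume (GammaTopPres b a k q.ε (augmentFam q.P)))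
        + (↑((m : ℝ) / 2 * Real.log k) : EReal) with hv
    have hpt : ∀ k : ℕ, (↑(((k : ℝ) ^ 2)⁻¹) : EReal) *
        ENNReal.log (volume (GammaTopPres (Fin.append a b)
            (fun i : Fin 0 => i.elim0) k ε₀ (combinedFam (augmentFam p.P) (augmentFam q.P))))
          + (↑(((n + m : ℕ) : ℝ) / 2 * Real.log k) : EReal) ≤ (u + v) k := by
      intro k
      have hc : (0 : ℝ) ≤ ((k : ℝ) ^ 2)⁻¹ := by positivity
      have hc' : (0 : EReal) ≤ (↑(((k : ℝ) ^ 2)⁻¹) : EReal) := by exact_mod_cast hc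
      have hvol := volume_combined_le a b k (min_le_left p.ε q.ε) (min_le_right p.ε q.ε)
        (augmentFam p.P) (augmentFam q.P)
      have hlog := ENNReal.log_monotone hvol
      rw [ENNReal.log_mul_add] at hlog
      have hm := mul_le_mul_of_nonneg_left hlog hc'
      rw [ereal_coe_mul_add _ hc] at hm
      have hconst : (↑(((n + m : ℕ) : ℝ) / 2 * Real.log k) : EReal)
          = (↑((n : ℝ) / 2 * Real.log k) : EReal) + (↑((m : ℝ) / 2 * Real.log k) : EReal) := by
        rw [← EReal.coe_add]
        norm_cast
        push_cast
        ring
      calc (↑(((k : ℝ) ^ 2)⁻¹) : EReal) *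
          ENNReal.log (volume (GammaTopPres (Fin.append a b)
              (fun i : Fin 0 => i.elim0) k ε₀ (combinedFam (augmentFam p.P) (augmentFam q.P))))
            + (↑(((n + m : ℕ) : ℝ) / 2 * Real.log k) : EReal)
          ≤ ((↑(((k : ℝ) ^ 2)⁻¹) : EReal) *
                ENNReal.log (volume (GammaTopPres a b k p.ε (augmentFam p.P)))
              + (↑(((k : ℝ) ^ 2)⁻¹) : EReal) *
                ENNReal.log (volume (GammaTopPres b a k q.ε (augmentFam q.P))))
            + (↑(((n + m : ℕ) : ℝ) / 2 * Real.log k) : EReal) := add_le_add_left hm _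
        _ = (u + v) k := by
            rw [hconst]
            show _ = u k + v k
            rw [hu, hv]
            exact add_add_add_comm _ _ _ _
    calc Filter.atTop.limsup (fun k : ℕ =>
          (↑(((k : ℝ) ^ 2)⁻¹) : EReal) * ENNReal.log (volume (GammaTopPres (Fin.append a b)
              (fun i : Fin 0 => i.elim0) k ε₀ (combinedFam (augmentFam p.P) (augmentFam q.P))))
            + (↑(((n + m : ℕ) : ℝ) / 2 * Real.log k) : EReal))
        ≤ Filter.atTop.limsup (u + v) :=
          Filter.limsup_le_limsup (Filter.Eventually.of_forall hpt)
      _ ≤ Filter.atTop.limsup u + Filter.atTop.limsup v :=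
          EReal.limsup_add_le (Or.inr (hGtop q)) (Or.inl (hFtop p))
      _ = F p + G q := rfl
  have h1 : chiTop (Fin.append a b) ≤ ⨅ p, ⨅ q, (F p + G q) :=
    le_iInf fun p => le_iInf fun q => hkey p q
  have h2 := iInf_add_iInf_le F G hFtop hGtop
  have h3 : (⨅ p, F p) ≤ chiTopPres a b := by
    rw [chiTopPres]
    refine le_iInf fun ε => le_iInf fun hε => le_iInf fun r => le_iInf fun P => ?_
    refine (iInf_le F ⟨ε, hε, r, P⟩).trans ?_
    refine Filter.limsup_le_limsup (Filter.Eventually.of_forall fun k => ?_)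
    refine add_le_add_left (mul_le_mul_of_nonneg_left ?_
      (by exact_mod_cast (by positivity : (0:ℝ) ≤ ((k : ℝ) ^ 2)⁻¹))) _
    exact ENNReal.log_monotone (measure_mono (gammaTopPres_augment_mono a b k ε P))
  have h4 : (⨅ q, G q) ≤ chiTopPres b a := by
    rw [chiTopPres]
    refine le_iInf fun ε => le_iInf fun hε => le_iInf fun r => le_iInf fun P => ?_
    refine (iInf_le G ⟨ε, hε, r, P⟩).trans ?_
    refine Filter.limsup_le_limsup (Filter.Eventually.of_forall fun k => ?_)
    refine add_le_add_left (mul_le_mul_of_nonneg_left ?_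
      (by exact_mod_cast (by positivity : (0:ℝ) ≤ ((k : ℝ) ^ 2)⁻¹))) _
    exact ENNReal.log_monotone (measure_mono (gammaTopPres_augment_mono b a k ε P))
  exact h1.trans (h2.trans (add_le_add h3 h4))

end Main

/-- Subadditivity of the topological free entropy. -/
theorem chiTop_subadditive {A : Type*} [NormedRing A] [NormedAlgebra ℂ A] [StarRing A]
    [CStarRing A] [CompleteSpace A] [StarModule ℂ A] {n m : ℕ}
    (a : Fin n → A) (b : Fin m → A)
    (ha : ∀ i, IsSelfAdjoint (a i)) (hb : ∀ j, IsSelfAdjoint (b j)) :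
    chiTop (Fin.append a b) ≤ chiTopPres a b + chiTopPres b a ∧
    chiTopPres a b + chiTopPres b a ≤ chiTop a + chiTop b := by
  exact ⟨chiTop_append_le a b,
    add_le_add (chiTopPres_le_chiTop a b) (chiTopPres_le_chiTop b a)⟩
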